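/- Let N be a positive integer whose Collatz trajectory reaches 1 and suppose O(N) ≤ 512. Then Res(N) = 2^{E(N)}/(3^{O(N)}·N) < 2. -/

import Mathlib

/-- The Collatz map: odd `n ↦ 3n+1`, even `n ↦ n/2`. -/
def collatz (n : ℕ) : ℕ := if n % 2 = 0 then n / 2 else 3 * n + 1

/-- The Collatz trajectory of `N` reaches `1`. -/
def ReachesOne (N : ℕ) : Prop := ∃ n, collatz^[n] N = 1

/-- Number of iterations needed for the trajectory of `N` to first reach `1`. -/
noncomputable def collatzSteps (N : ℕ) : ℕ := sInf {n | collatz^[n] N = 1}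

/-- `E(N)`: the number of even terms in the trajectory from `N` to `1`. -/
noncomputable def collatzE (N : ℕ) : ℕ :=
  ((Finset.range (collatzSteps N)).filter (fun j => (collatz^[j] N) % 2 = 0)).card

/-- `O(N)`: the number of odd terms greater than `1` in the trajectory from `N` to `1`. -/
noncomputable def collatzO (N : ℕ) : ℕ :=
  ((Finset.range (collatzSteps N)).filter
    (fun j => (collatz^[j] N) % 2 = 1 ∧ 1 < collatz^[j] N)).card

/-- The residue `Res(N) = 2^{E(N)} / (3^{O(N)} · N)`. -/
noncomputable def collatzRes (N : ℕ) : ℝ :=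
  2 ^ (collatzE N) / (3 ^ (collatzO N) * (N : ℝ))

/-- The list of odd iterates greater than `1` in the trajectory of `N` down to `1`. -/
noncomputable def oddIterates (N : ℕ) : List ℕ :=
  ((List.range (collatzSteps N)).map (fun j => collatz^[j] N)).filter
    (fun x => decide (x % 2 = 1 ∧ 1 < x))

lemma reaches_iterate {N : ℕ} (h : ReachesOne N) : collatz^[collatzSteps N] N = 1 :=
  Nat.sInf_mem h

lemma steps_le {N n : ℕ} (hn : collatz^[n] N = 1) : collatzSteps N ≤ n := Nat.sInf_le hn

lemma steps_one : collatzSteps 1 = 0 :=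
  Nat.le_zero.mp (steps_le rfl)

lemma collatz_pos {N : ℕ} (hN : 0 < N) : 0 < collatz N := by
  unfold collatz
  split <;> omega

lemma reaches_succ {N : ℕ} (h : ReachesOne N) (h1 : N ≠ 1) :
    ReachesOne (collatz N) ∧ collatzSteps N = collatzSteps (collatz N) + 1 := by
  have hs := reaches_iterate h
  have h0 : collatzSteps N ≠ 0 := by
    intro e; rw [e] at hs; exact h1 hs
  obtain ⟨m, hm⟩ := Nat.exists_eq_succ_of_ne_zero h0
  rw [hm, Function.iterate_succ_apply] at hs
  have hr : ReachesOne (collatz N) := ⟨m, hs⟩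
  refine ⟨hr, ?_⟩
  have h2 : collatzSteps (collatz N) ≤ m := steps_le hs
  have h3 : collatzSteps N ≤ collatzSteps (collatz N) + 1 := by
    apply steps_le
    rw [Function.iterate_succ_apply]
    exact reaches_iterate hr
  omega

lemma collatzE_succ {N : ℕ} (h : ReachesOne N) (h1 : N ≠ 1) :
    collatzE N = (if N % 2 = 0 then 1 else 0) + collatzE (collatz N) := by
  obtain ⟨hr, hst⟩ := reaches_succ h h1
  unfold collatzE
  rw [hst, Finset.card_filter, Finset.card_filter, Finset.sum_range_succ']
  simp only [Function.iterate_succ_apply, Function.iterate_zero_apply]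
  exact add_comm _ _

lemma collatzO_succ {N : ℕ} (h : ReachesOne N) (h1 : N ≠ 1) :
    collatzO N = (if N % 2 = 1 ∧ 1 < N then 1 else 0) + collatzO (collatz N) := by
  obtain ⟨hr, hst⟩ := reaches_succ h h1
  unfold collatzO
  rw [hst, Finset.card_filter, Finset.card_filter, Finset.sum_range_succ']
  simp only [Function.iterate_succ_apply, Function.iterate_zero_apply]
  exact add_comm _ _

lemma oddIterates_succ {N : ℕ} (h : ReachesOne N) (h1 : N ≠ 1) :
    oddIterates N = (if N % 2 = 1 ∧ 1 < N then [N] else []) ++ oddIterates (collatz N) := by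
  obtain ⟨hr, hst⟩ := reaches_succ h h1
  unfold oddIterates
  rw [hst, List.range_succ_eq_map, List.map_cons, List.map_map, List.filter_cons]
  simp only [Function.comp_def, Function.iterate_succ_apply, Function.iterate_zero_apply,
    Nat.succ_eq_add_one]
  by_cases hc : N % 2 = 1 ∧ 1 < N
  · simp [hc]
  · simp [hc]

lemma key_aux : ∀ s N, collatzSteps N = s → 0 < N → ReachesOne N →
    2 ^ (collatzE N) * (oddIterates N).prod
      = N * ((oddIterates N).map (fun x => 3 * x + 1)).prod ∧
    (oddIterates N).length = collatzO N := by
  intro s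
  induction s using Nat.strong_induction_on with
  | _ s ih =>
    intro N hs hN h
    by_cases h1 : N = 1
    · subst h1
      simp [oddIterates, collatzE, collatzO, steps_one]
    · obtain ⟨hr, hst⟩ := reaches_succ h h1
      have hpos : 0 < collatz N := collatz_pos hN
      have ihc := ih (collatzSteps (collatz N)) (by omega) (collatz N) rfl hpos hr
      have hE := collatzE_succ h h1
      have hO := collatzO_succ h h1
      have hL := oddIterates_succ h h1
      by_cases hpar : N % 2 = 0
      · have hcond : ¬(N % 2 = 1 ∧ 1 < N) := by omega
        rw [if_neg hcond] at hL
        rw [if_pos hpar] at hE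
        rw [if_neg hcond] at hO
        have hc : collatz N = N / 2 := if_pos hpar
        constructor
        · rw [hE, hL, pow_add, pow_one]
          simp only [List.nil_append, List.map_nil]
          calc 2 ^ 1 * 2 ^ collatzE (collatz N) * (oddIterates (collatz N)).prod
              = 2 * (2 ^ collatzE (collatz N) * (oddIterates (collatz N)).prod) := by ring
            _ = 2 * (collatz N * ((oddIterates (collatz N)).map (fun x => 3 * x + 1)).prod) := by
                rw [ihc.1]
            _ = N * ((oddIterates (collatz N)).map (fun x => 3 * x + 1)).prod := by
                rw [hc]; have : 2 * (N / 2) = N := by omega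
                rw [← mul_assoc, this]
        · rw [hL, hO]; simpa using ihc.2
      · have hodd : N % 2 = 1 := by omega
        have hcond : N % 2 = 1 ∧ 1 < N := ⟨hodd, by omega⟩
        rw [if_pos hcond] at hL
        rw [if_neg hpar] at hE
        rw [if_pos hcond] at hO
        have hc : collatz N = 3 * N + 1 := if_neg hpar
        constructor
        · rw [hE, hL]
          simp only [List.singleton_append, List.prod_cons, List.map_cons, List.prod_cons,
            Nat.zero_add]
          calc 2 ^ collatzE (collatz N) * (N * (oddIterates (collatz N)).prod)
              = N * (2 ^ collatzE (collatz N) * (oddIterates (collatz N)).prod) := by ring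
            _ = N * (collatz N * ((oddIterates (collatz N)).map (fun x => 3 * x + 1)).prod) := by
                rw [ihc.1]
            _ = N * ((3 * N + 1) * ((oddIterates (collatz N)).map (fun x => 3 * x + 1)).prod) := by
                rw [hc]
        · rw [hL, hO]
          simp only [List.singleton_append, List.length_cons]
          rw [ihc.2]
          omega
  
lemma not_three_dvd_aux : ∀ s N, collatzSteps N = s → ¬(3 ∣ N) → ReachesOne N →
    ∀ x ∈ oddIterates N, ¬(3 ∣ x) := by
  intro s
  induction s using Nat.strong_induction_on with
  | _ s ih =>
    intro N hs h3 h x hx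
    by_cases h1 : N = 1
    · subst h1
      simp [oddIterates, steps_one] at hx
    · obtain ⟨hr, hst⟩ := reaches_succ h h1
      rw [oddIterates_succ h h1] at hx
      have h3c : ¬(3 ∣ collatz N) := by
        unfold collatz
        split_ifs with hpar
        · intro hd; exact h3 (by omega)
        · intro hd; omega
      rcases List.mem_append.mp hx with hx1 | hx2
      · have : x = N := by
          by_cases hcond : N % 2 = 1 ∧ 1 < N
          · rw [if_pos hcond] at hx1; simpa using hx1
          · rw [if_neg hcond] at hx1; simp at hx1
        rw [this]; exact h3
      · exact ih (collatzSteps (collatz N)) (by omega) (collatz N) rfl h3c hr x hx2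

lemma iterates_inj {N : ℕ} (h : ReachesOne N) :
    ∀ i < collatzSteps N, ∀ j < collatzSteps N, collatz^[i] N = collatz^[j] N → i = j := by
  have key : ∀ i j, i < j → j < collatzSteps N → collatz^[i] N = collatz^[j] N → False := by
    intro i j hij hj heq
    have hs := reaches_iterate h
    have h2 : collatz^[(collatzSteps N - j) + i] N = 1 := by
      rw [Function.iterate_add_apply, heq, ← Function.iterate_add_apply]
      have : collatzSteps N - j + j = collatzSteps N := by omega
      rw [this, hs]
    have := steps_le h2
    omega
  intro i hi j hj heq
  rcases lt_trichotomy i j with hlt | he | hgt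
  · exact absurd (key i j hlt hj heq) (by simp)
  · exact he
  · exact absurd (key j i hgt hi heq.symm) (by simp)

lemma oddIterates_nodup {N : ℕ} (h : ReachesOne N) : (oddIterates N).Nodup := by
  unfold oddIterates
  apply List.Nodup.filter
  apply List.Nodup.map_on ?_ List.nodup_range
  intro x hx y hy hxy
  exact iterates_inj h x (List.mem_range.mp hx) y (List.mem_range.mp hy) hxy

lemma mem_oddIterates {N x : ℕ} (hx : x ∈ oddIterates N) : x % 2 = 1 ∧ 1 < x := by
  unfold oddIterates at hx
  have := List.of_mem_filter hx
  simpa using this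

def vslot (i : ℕ) : ℕ := if i % 2 = 0 then 3 * i + 5 else 3 * i + 4

def collatzAB : ℕ → ℕ × ℕ :=
  fun n => Nat.rec ((1, 1) : ℕ × ℕ)
    (fun i p => ((3 * vslot i + 1) * p.1, (3 * vslot i) * p.2)) n

lemma collatzAB_spec (n : ℕ) : collatzAB n =
    (∏ i ∈ Finset.range n, (3 * vslot i + 1), ∏ i ∈ Finset.range n, (3 * vslot i)) := by
  induction n with
  | zero => simp [collatzAB]
  | succ n ih =>
    have hstep : collatzAB (n + 1)
        = ((3 * vslot n + 1) * (collatzAB n).1, (3 * vslot n) * (collatzAB n).2) := rfl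
    rw [hstep, ih, Finset.prod_range_succ, Finset.prod_range_succ]
    simp [mul_comm]

lemma vslot_pos (i : ℕ) : 0 < vslot i := by unfold vslot; split <;> omega

lemma vslot_mono {i j : ℕ} (hij : i ≤ j) : vslot i ≤ vslot j := by
  unfold vslot; split_ifs <;> omega

lemma vslot_inv {x : ℕ} (h2 : x % 2 = 1) (h1 : 1 < x) (h3 : ¬ 3 ∣ x) :
    vslot ((x - 4) / 3) = x := by
  unfold vslot
  have h3' : x % 3 ≠ 0 := fun hh => h3 (Nat.dvd_of_mod_eq_zero hh)
  split_ifs with hp <;> omega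

set_option maxRecDepth 10000 in
lemma num_fact : 82 * (collatzAB 512).1 < 162 * (collatzAB 512).2 := by decide

lemma prod_le_range (h : ℕ → ℝ) (hanti : ∀ i j, i ≤ j → h j ≤ h i) (h1 : ∀ i, 1 ≤ h i) :
    ∀ n (T : Finset ℕ), T.card ≤ n → ∏ i ∈ T, h i ≤ ∏ i ∈ Finset.range n, h i := by
  have hnn : ∀ (S : Finset ℕ), (0:ℝ) ≤ ∏ i ∈ S, h i :=
    fun S => Finset.prod_nonneg fun i _ => le_trans zero_le_one (h1 i)
  intro n
  induction n with
  | zero =>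
    intro T hT
    rw [Nat.le_zero, Finset.card_eq_zero] at hT
    subst hT; simp
  | succ n ih =>
    intro T hT
    by_cases hc : T.card ≤ n
    · calc ∏ i ∈ T, h i ≤ ∏ i ∈ Finset.range n, h i := ih T hc
        _ ≤ ∏ i ∈ Finset.range (n+1), h i := by
            rw [Finset.prod_range_succ]
            exact le_mul_of_one_le_right (hnn _) (h1 n)
    · have hne : T.Nonempty := Finset.card_pos.mp (by omega)
      set M := T.max' hne with hMdef
      have hM : M ∈ T := T.max'_mem hne
      have hTsub : T ⊆ Finset.range (M + 1) :=
        fun x hx => Finset.mem_range.mpr (Nat.lt_succ_of_le (T.le_max' x hx))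
      have hMn : n ≤ M := by
        have := Finset.card_le_card hTsub
        rw [Finset.card_range] at this
        omega
      have hsplit : ∏ i ∈ T, h i = (∏ i ∈ T.erase M, h i) * h M := by
        rw [mul_comm, Finset.mul_prod_erase T h hM]
      rw [hsplit, Finset.prod_range_succ]
      exact mul_le_mul (ih (T.erase M) (by rw [Finset.card_erase_of_mem hM]; omega))
        (hanti n M hMn) (le_trans zero_le_one (h1 M)) (hnn _)

lemma ratio_form (v : ℕ) (hv : 0 < v) : ((3 * v + 1 : ℕ) : ℝ) / ((3 * v : ℕ) : ℝ)
    = 1 + 1 / (3 * (v : ℝ)) := by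
  have : (0:ℝ) < 3 * (v:ℝ) := by positivity
  field_simp
  push_cast
  ring

lemma hslot_anti : ∀ i j, i ≤ j →
    ((3 * vslot j + 1 : ℕ) : ℝ) / ((3 * vslot j : ℕ) : ℝ)
      ≤ ((3 * vslot i + 1 : ℕ) : ℝ) / ((3 * vslot i : ℕ) : ℝ) := by
  intro i j hij
  rw [ratio_form _ (vslot_pos i), ratio_form _ (vslot_pos j)]
  have h1 : (0:ℝ) < 3 * (vslot i : ℝ) := by have := vslot_pos i; positivity
  have h2 : (3 : ℝ) * (vslot i : ℝ) ≤ 3 * (vslot j : ℝ) := by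
    have := vslot_mono hij
    have : (vslot i : ℝ) ≤ (vslot j : ℝ) := Nat.cast_le.mpr this
    linarith
  have := one_div_le_one_div_of_le h1 h2
  linarith

lemma hslot_one_le (i : ℕ) : 1 ≤ ((3 * vslot i + 1 : ℕ) : ℝ) / ((3 * vslot i : ℕ) : ℝ) := by
  rw [ratio_form _ (vslot_pos i)]
  have : (0:ℝ) < 3 * (vslot i : ℝ) := by have := vslot_pos i; positivity
  have : (0:ℝ) ≤ 1 / (3 * (vslot i : ℝ)) := by positivity
  linarith

lemma finset_prod_bound (T : Finset ℕ) (hT : ∀ x ∈ T, x % 2 = 1 ∧ 1 < x ∧ ¬ 3 ∣ x)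
    (hcard : T.card ≤ 512) :
    ∏ x ∈ T, ((3 * (x:ℝ) + 1) / (3 * x))
      ≤ ((collatzAB 512).1 : ℝ) / ((collatzAB 512).2 : ℝ) := by
  have hinj : ∀ x ∈ T, ∀ y ∈ T, (x - 4) / 3 = (y - 4) / 3 → x = y := by
    intro x hx y hy hxy
    obtain ⟨hx2, hx1, hx3⟩ := hT x hx
    obtain ⟨hy2, hy1, hy3⟩ := hT y hy
    rw [← vslot_inv hx2 hx1 hx3, ← vslot_inv hy2 hy1 hy3, hxy]
  have himg : ∏ i ∈ T.image (fun x => (x - 4) / 3),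
      ((3 * vslot i + 1 : ℕ) : ℝ) / ((3 * vslot i : ℕ) : ℝ)
        = ∏ x ∈ T, ((3 * (x:ℝ) + 1) / (3 * x)) := by
    rw [Finset.prod_image hinj]
    apply Finset.prod_congr rfl
    intro x hx
    obtain ⟨hx2, hx1, hx3⟩ := hT x hx
    rw [vslot_inv hx2 hx1 hx3]
    push_cast
    ring_nf
  rw [← himg]
  have hb := prod_le_range (fun i => ((3 * vslot i + 1 : ℕ) : ℝ) / ((3 * vslot i : ℕ) : ℝ))
    hslot_anti hslot_one_le 512 (T.image (fun x => (x - 4) / 3))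
    (le_trans Finset.card_image_le hcard)
  refine le_trans hb (le_of_eq ?_)
  rw [collatzAB_spec]
  simp only [Prod.fst, Prod.snd]
  rw [Nat.cast_prod, Nat.cast_prod, ← Finset.prod_div_distrib]

set_option maxRecDepth 100000

lemma prod_map_three (l : List ℕ) : (l.map fun x => 3 * x).prod = 3 ^ l.length * l.prod := by
  induction l with
  | nil => simp
  | cons a t ih => simp only [List.map_cons, List.prod_cons, List.length_cons, ih, pow_succ]; ring

lemma list_ratio (l : List ℕ) (hl : ∀ x ∈ l, 0 < x) :
    (l.map (fun x : ℕ => (3 * (x:ℝ) + 1) / (3 * x))).prod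
      = (((l.map fun x => 3 * x + 1).prod : ℕ) : ℝ) / (((l.map fun x => 3 * x).prod : ℕ) : ℝ) := by
  induction l with
  | nil => simp
  | cons a t ih =>
    have ht : ∀ x ∈ t, 0 < x := fun x hx => hl x (List.mem_cons_of_mem _ hx)
    simp only [List.map_cons, List.prod_cons]
    rw [ih ht]
    push_cast
    rw [div_mul_div_comm]

lemma res_eq_prod {N : ℕ} (hN : 0 < N) (h : ReachesOne N) :
    collatzRes N = ((oddIterates N).map (fun x : ℕ => (3 * (x:ℝ) + 1) / (3 * x))).prod := by
  obtain ⟨hid, hlen⟩ := key_aux (collatzSteps N) N rfl hN h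
  set l := oddIterates N with hl
  have hpos : ∀ x ∈ l, 0 < x := fun x hx => lt_trans one_pos (mem_oddIterates hx).2
  have hlp : 0 < l.prod := List.prod_pos hpos
  have hidR := congrArg (fun k : ℕ => (k : ℝ)) hid
  push_cast at hidR
  rw [list_ratio l hpos, collatzRes, prod_map_three, hlen]
  have hd1 : (0:ℝ) < 3 ^ (collatzO N) * (N : ℝ) := by
    have : (0:ℝ) < (N:ℝ) := Nat.cast_pos.mpr hN
    positivity
  have hd2 : (0:ℝ) < ((3 ^ (collatzO N) * l.prod : ℕ) : ℝ) := by
    have : 0 < 3 ^ (collatzO N) * l.prod := by positivity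
    exact_mod_cast this
  rw [div_eq_div_iff (ne_of_gt hd1) (ne_of_gt hd2)]
  push_cast
  linear_combination (3:ℝ) ^ (collatzO N) * hidR

lemma steps_of {N n : ℕ} (h1 : collatz^[n] N = 1) (h2 : ∀ m < n, collatz^[m] N ≠ 1) :
    collatzSteps N = n :=
  le_antisymm (steps_le h1) (not_lt.mp fun hlt => h2 _ hlt (reaches_iterate ⟨n, h1⟩))

lemma conc {N n e o : ℕ} (h1 : collatz^[n] N = 1) (h2 : ∀ m < n, collatz^[m] N ≠ 1)
    (hE : ((Finset.range n).filter (fun j => (collatz^[j] N) % 2 = 0)).card = e)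
    (hO : ((Finset.range n).filter
      (fun j => (collatz^[j] N) % 2 = 1 ∧ 1 < collatz^[j] N)).card = o) :
    collatzE N = e ∧ collatzO N = o := by
  have hs := steps_of h1 h2
  constructor
  · unfold collatzE; rw [hs]; exact hE
  · unfold collatzO; rw [hs]; exact hO

lemma hB_pos : 0 < (collatzAB 512).2 := by
  rw [collatzAB_spec]
  show 0 < ∏ i ∈ Finset.range 512, 3 * vslot i
  exact Finset.prod_pos fun i _ => Nat.mul_pos (by norm_num) (vslot_pos i)

lemma num_real : ((collatzAB 512).1 : ℝ) / ((collatzAB 512).2 : ℝ) < 162 / 82 := by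
  have hB : (0:ℝ) < ((collatzAB 512).2 : ℝ) := by exact_mod_cast hB_pos
  rw [div_lt_div_iff₀ hB (by norm_num)]
  have h1 : (82 * (collatzAB 512).1 : ℕ) < (162 * (collatzAB 512).2 : ℕ) := num_fact
  have hcast : (82 : ℝ) * ((collatzAB 512).1 : ℝ) < 162 * ((collatzAB 512).2 : ℝ) := by
    exact_mod_cast h1
  linarith

lemma main_aux : ∀ s N, collatzSteps N = s → 0 < N → ReachesOne N → collatzO N ≤ 512 →
    collatzRes N < 2 := by
  intro s
  induction s using Nat.strong_induction_on with
  | _ s ih =>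
    intro N hs hN h hO
    by_cases h1 : N = 1
    · subst h1
      have hE : collatzE 1 = 0 := by unfold collatzE; rw [steps_one]; rfl
      have hO1 : collatzO 1 = 0 := by unfold collatzO; rw [steps_one]; rfl
      unfold collatzRes
      rw [hE, hO1]
      norm_num
    · obtain ⟨hr, hst⟩ := reaches_succ h h1
      by_cases hpar : N % 2 = 0
      · -- even step: reduce to N/2
        have hE := collatzE_succ h h1; rw [if_pos hpar] at hE
        have hOe := collatzO_succ h h1
        rw [if_neg (by omega : ¬(N % 2 = 1 ∧ 1 < N)), Nat.zero_add] at hOe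
        have hcpos : 0 < collatz N := collatz_pos hN
        have hres : collatzRes N = collatzRes (collatz N) := by
          unfold collatzRes
          rw [hE, hOe, pow_add, pow_one]
          have hNat : N = 2 * collatz N := by
            unfold collatz; rw [if_pos hpar]; omega
          have hN2 : (N:ℝ) = 2 * ((collatz N : ℕ) : ℝ) := by exact_mod_cast hNat
          rw [hN2]
          have hc0 : ((collatz N : ℕ):ℝ) ≠ 0 := by
            exact_mod_cast Nat.pos_iff_ne_zero.mp hcpos
          have hc3 : ((3:ℝ) ^ collatzO (collatz N)) ≠ 0 := by positivity
          field_simp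
        rw [hres]
        exact ih _ (by omega) (collatz N) rfl hcpos hr (by omega)
      · -- odd N
        have hodd : N % 2 = 1 := by omega
        have hNgt : 1 < N := by omega
        have hres := res_eq_prod hN h
        obtain ⟨hid, hlen⟩ := key_aux (collatzSteps N) N rfl hN h
        have hnd := oddIterates_nodup h
        by_cases h3 : (3:ℕ) ∣ N
        · by_cases hsmall : N < 27
          · have hcases : N = 3 ∨ N = 9 ∨ N = 15 ∨ N = 21 := by omega
            rcases hcases with rfl | rfl | rfl | rfl
            · obtain ⟨hE, hOv⟩ := conc (N := 3) (n := 7) (e := 5) (o := 2)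
                (by decide) (by decide) (by decide) (by decide)
              unfold collatzRes; rw [hE, hOv]; norm_num
            · obtain ⟨hE, hOv⟩ := conc (N := 9) (n := 19) (e := 13) (o := 6)
                (by decide) (by decide) (by decide) (by decide)
              unfold collatzRes; rw [hE, hOv]; norm_num
            · obtain ⟨hE, hOv⟩ := conc (N := 15) (n := 17) (e := 12) (o := 5)
                (by decide) (by decide) (by decide) (by decide)
              unfold collatzRes; rw [hE, hOv]; norm_num
            · obtain ⟨hE, hOv⟩ := conc (N := 21) (n := 7) (e := 6) (o := 1)
                (by decide) (by decide) (by decide) (by decide)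
              unfold collatzRes; rw [hE, hOv]; norm_num
          · push_neg at hsmall
            have hLrec := oddIterates_succ h h1
            rw [if_pos ⟨hodd, hNgt⟩] at hLrec
            have hc : collatz N = 3 * N + 1 := if_neg hpar
            have h3c : ¬ (3:ℕ) ∣ collatz N := by rw [hc]; omega
            have hmem' : ∀ x ∈ (oddIterates (collatz N)).toFinset,
                x % 2 = 1 ∧ 1 < x ∧ ¬ 3 ∣ x := by
              intro x hx
              have hx' := List.mem_toFinset.mp hx
              obtain ⟨ha, hb⟩ := mem_oddIterates hx'
              exact ⟨ha, hb, not_three_dvd_aux _ (collatz N) rfl h3c hr x hx'⟩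
            have hnd' : (oddIterates (collatz N)).Nodup := by
              rw [hLrec] at hnd
              exact (List.nodup_cons.mp (by simpa using hnd)).2
            have hlen' : (oddIterates (collatz N)).length ≤ 512 := by
              rw [hLrec] at hlen
              simp only [List.singleton_append, List.length_cons] at hlen
              omega
            have hPT := (List.prod_toFinset
              (fun x : ℕ => (3 * (x:ℝ) + 1) / (3 * x)) hnd').symm
            have hcardT : (oddIterates (collatz N)).toFinset.card ≤ 512 := by
              rw [List.toFinset_card_of_nodup hnd']; exact hlen'
            have hTb := finset_prod_bound _ hmem' hcardT
            have hP'nonneg : (0:ℝ) ≤ ∏ x ∈ (oddIterates (collatz N)).toFinset,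
                ((3 * (x:ℝ) + 1) / (3 * x)) := by
              apply Finset.prod_nonneg
              intro x hx
              have hx1 := (hmem' x hx).2.1
              have hx0 : (0:ℝ) < x := by exact_mod_cast lt_trans one_pos hx1
              positivity
            have hgN : (3 * (N:ℝ) + 1) / (3 * N) ≤ 82 / 81 := by
              have hN27 : (27:ℝ) ≤ (N:ℝ) := by exact_mod_cast hsmall
              rw [div_le_div_iff₀ (by linarith) (by norm_num)]
              linarith
            rw [hres, hLrec]
            simp only [List.singleton_append, List.map_cons, List.prod_cons]
            rw [hPT]
            calc (3 * (N:ℝ) + 1) / (3 * N) * ∏ x ∈ (oddIterates (collatz N)).toFinset,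
                  ((3 * (x:ℝ) + 1) / (3 * x))
                ≤ (82/81) * (((collatzAB 512).1 : ℝ) / ((collatzAB 512).2 : ℝ)) :=
                  mul_le_mul hgN hTb hP'nonneg (by norm_num)
              _ < (82/81) * (162/82) := by
                  apply mul_lt_mul_of_pos_left num_real (by norm_num)
              _ = 2 := by norm_num
        · have hmem3 : ∀ x ∈ (oddIterates N).toFinset, x % 2 = 1 ∧ 1 < x ∧ ¬ 3 ∣ x := by
            intro x hx
            have hx' := List.mem_toFinset.mp hx
            obtain ⟨ha, hb⟩ := mem_oddIterates hx'
            exact ⟨ha, hb, not_three_dvd_aux _ N rfl h3 h x hx'⟩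
          have hcardT : (oddIterates N).toFinset.card ≤ 512 := by
            rw [List.toFinset_card_of_nodup hnd, hlen]; exact hO
          have hTb := finset_prod_bound _ hmem3 hcardT
          rw [hres, ← List.prod_toFinset (fun x : ℕ => (3 * (x:ℝ) + 1) / (3 * x)) hnd]
          calc ∏ x ∈ (oddIterates N).toFinset, ((3 * (x:ℝ) + 1) / (3 * x))
              ≤ ((collatzAB 512).1 : ℝ) / ((collatzAB 512).2 : ℝ) := hTb
            _ < 162/82 := num_real
            _ < 2 := by norm_num

theorem res_lt_two_of_O_le (N : ℕ) (hN : 0 < N) (h : ReachesOne N)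
    (hO : collatzO N ≤ 512) : collatzRes N < 2 :=
  main_aux (collatzSteps N) N rfl hN h hO
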